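/- For every odd prime p, the set of primes q such that p divides 2q+1 and 2q does not lie in the image of φ is infinite. -/

import Mathlib

open Nat

lemma not_totient_aux (q : ℕ) (hq : q.Prime) (h3 : 3 < q)
    (hcomp : ¬ (2 * q + 1).Prime) : ¬ ∃ n : ℕ, 0 < n ∧ Nat.totient n = 2 * q := by
  rintro ⟨n, hn, hφ⟩
  have hq1 : 1 < q := hq.one_lt
  have hqodd : q % 2 = 1 := Nat.odd_iff.mp (hq.odd_of_ne_two (by omega))
  have hn0 : n ≠ 0 := hn.ne'
  -- main argument given an odd prime r dividing n
  have key : ∀ r : ℕ, r.Prime → Odd r → r ∣ n → False := by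
    intro r hr hrodd hrn
    have hrodd' : r % 2 = 1 := Nat.odd_iff.mp hrodd
    set k := n.factorization r with hk
    have hk1 : 0 < k := (hr.factorization_pos_of_dvd hn0 hrn)
    have hnd : ¬ r ∣ (n / r ^ k) := Nat.not_dvd_ordCompl hr hn0
    have hcop : Nat.Coprime (r ^ k) (n / r ^ k) :=
      Nat.Coprime.pow_left _ ((Nat.Prime.coprime_iff_not_dvd hr).mpr hnd)
    have hmul : r ^ k * (n / r ^ k) = n := Nat.ordProj_mul_ordCompl_eq_self n r
    have htot : Nat.totient (r ^ k) * Nat.totient (n / r ^ k) = 2 * q := by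
      rw [← Nat.totient_mul hcop, hmul, hφ]
    have hpow : Nat.totient (r ^ k) = r ^ (k - 1) * (r - 1) :=
      Nat.totient_prime_pow hr hk1
    set m := n / r ^ k with hm
    have hm0 : 0 < m := Nat.ordCompl_pos r hn0
    -- φ m must be odd
    have hmodd : ¬ Even (Nat.totient m) := by
      intro he
      have h2r : 2 ∣ r - 1 := by omega
      have h4 : 4 ∣ 2 * q := by
        rw [← htot, hpow]
        obtain ⟨a, ha⟩ := h2r
        obtain ⟨b, hb⟩ := he
        rw [ha, hb]
        exact ⟨r ^ (k-1) * a * b, by ring⟩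
      omega
    have hmle : m ≤ 2 := by
      by_contra h
      exact hmodd (Nat.totient_even (by omega))
    have hφm : Nat.totient m = 1 := by
      interval_cases m <;> simp
    rw [hpow, hφm, mul_one] at htot
    rcases Nat.lt_or_ge k 2 with hk2 | hk2
    · -- k = 1
      have hk1' : k = 1 := by omega
      rw [hk1'] at htot
      simp at htot
      have : r = 2 * q + 1 := by omega
      exact hcomp (this ▸ hr)
    · -- k ≥ 2 : r ∣ 2q, r odd ⇒ r = q
      have hrdvd : r ∣ 2 * q := by
        rw [← htot]
        exact Dvd.dvd.mul_right (dvd_pow_self r (by omega)) _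
      have hrq : r ∣ q := (Nat.Coprime.dvd_of_dvd_mul_left
        ((Nat.Prime.coprime_iff_not_dvd hr).mpr (by
          intro h2
          have := (Nat.prime_dvd_prime_iff_eq hr Nat.prime_two).mp h2
          omega)) hrdvd)
      have hrq' : r = q := (Nat.prime_dvd_prime_iff_eq hr hq).mp hrq
      have h1 : r ≤ r ^ (k - 1) := by
        calc r = r ^ 1 := (pow_one r).symm
        _ ≤ r ^ (k-1) := Nat.pow_le_pow_right hr.pos (by omega)
      have h2 : 4 ≤ r - 1 := by omega
      have h3' : r * 4 ≤ r ^ (k - 1) * (r - 1) := Nat.mul_le_mul h1 h2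
      omega
  -- n must have an odd prime divisor
  rcases Nat.even_or_odd n with hev | hodd'
  · -- n even: consider odd part
    have ha1 : 0 < n.factorization 2 :=
      Nat.Prime.factorization_pos_of_dvd Nat.prime_two hn0 hev.two_dvd
    set m := n / 2 ^ (n.factorization 2) with hm
    have hm0 : 0 < m := Nat.ordCompl_pos 2 hn0
    have hmul : 2 ^ (n.factorization 2) * m = n := Nat.ordProj_mul_ordCompl_eq_self n 2
    rcases eq_or_ne m 1 with h1 | h1
    · -- n = 2 ^ a
      rw [h1, mul_one] at hmul
      have heq : Nat.totient n = 2 ^ (n.factorization 2 - 1) := by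
        conv_lhs => rw [← hmul]
        rw [Nat.totient_prime_pow Nat.prime_two ha1]
        simp
      rw [hφ] at heq
      have hqd : q ∣ 2 ^ (n.factorization 2 - 1) := ⟨2, by omega⟩
      obtain ⟨i, _, hi⟩ := (Nat.dvd_prime_pow Nat.prime_two).mp hqd
      rcases Nat.eq_zero_or_pos i with h0 | h0
      · rw [h0] at hi; simp at hi; omega
      · have : 2 ∣ q := hi ▸ dvd_pow_self 2 h0.ne'
        omega
    · -- m > 1: minFac m odd prime divides n
      have hmf : (m.minFac).Prime := Nat.minFac_prime h1
      have hmodd : ¬ 2 ∣ m := Nat.not_dvd_ordCompl Nat.prime_two hn0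
      have hmfodd : Odd m.minFac := by
        rcases Nat.even_or_odd m.minFac with he | ho
        · exact absurd ((even_iff_two_dvd.mp he).trans (Nat.minFac_dvd m)) hmodd
        · exact ho
      exact key m.minFac hmf hmfodd ((Nat.minFac_dvd m).trans (Nat.ordCompl_dvd n 2))
  · -- n odd
    have hodd'' : n % 2 = 1 := Nat.odd_iff.mp hodd'
    have hn1 : n ≠ 1 := by
      intro h; rw [h] at hφ; simp at hφ; omega
    have hmf : (n.minFac).Prime := Nat.minFac_prime hn1
    have hmfodd : Odd n.minFac := by
      rcases Nat.even_or_odd n.minFac with he | ho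
      · exfalso
        have := (even_iff_two_dvd.mp he).trans (Nat.minFac_dvd n)
        omega
      · exact ho
    exact key n.minFac hmf hmfodd (Nat.minFac_dvd n)

theorem infinite_primes_not_in_image (p : ℕ) (hp : p.Prime) (hodd : Odd p) :
    {q : ℕ | q.Prime ∧ p ∣ 2 * q + 1 ∧ ¬∃ n : ℕ, 0 < n ∧ Nat.totient n = 2 * q}.Infinite := by
  haveI : NeZero p := ⟨hp.pos.ne'⟩
  haveI : Fact p.Prime := ⟨hp⟩
  have hpodd : p % 2 = 1 := Nat.odd_iff.mp hodd
  have h2 : (2 : ZMod p) ≠ 0 := by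
    intro h
    have h' : ((2 : ℕ) : ZMod p) = 0 := by exact_mod_cast h
    have := (ZMod.natCast_eq_zero_iff 2 p).mp h'
    have := (Nat.prime_dvd_prime_iff_eq hp Nat.prime_two).mp this
    omega
  set a : ZMod p := -(2 : ZMod p)⁻¹ with ha
  have haunit : IsUnit a := ((Ne.isUnit h2).inv).neg
  have hinf := Nat.infinite_setOfPred_prime_and_eq_mod (q := p) haunit
  have hfin : ({q : ℕ | q ≤ p + 3} : Set ℕ).Finite := Set.finite_Iic (p + 3)
  apply Set.Infinite.mono (s := {q : ℕ | q.Prime ∧ (q : ZMod p) = a} \ {q : ℕ | q ≤ p + 3})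
  · rintro q ⟨⟨hqp, hqmod⟩, hqgt⟩
    simp only [Set.mem_setOf_eq, not_le] at hqgt
    have hq3 : 3 < q := by omega
    have hdvd : p ∣ 2 * q + 1 := by
      rw [← ZMod.natCast_eq_zero_iff]
      push_cast
      rw [hqmod, ha]
      field_simp
      ring
    refine ⟨hqp, hdvd, not_totient_aux q hqp hq3 ?_⟩
    intro hpr
    have := (Nat.prime_dvd_prime_iff_eq hp hpr).mp hdvd
    omega
  · exact hinf.diff hfin
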